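/- A linear map T : M_n → M_n is a Schur multiplier (i.e., there exists φ ∈ M_n with T(X)ᵢⱼ = φᵢⱼ Xᵢⱼ for all X) if and only if T(D_x A D_y) = D_x T(A) D_y for all diagonal matrices D_x, D_y and all A ∈ M_n. In that case φᵢⱼ = ⟨T(|i⟩⟨j|) , |i⟩⟨j|⟩ (the (i,j) entry of T(|i⟩⟨j|)). -/

import Mathlib

open scoped BigOperators Kronecker ComplexOrder Matrix

/-- The ℓ²→ℓ² operator norm of a square complex matrix. -/
noncomputable def opNorm {n : Type*} [Fintype n] [DecidableEq n] (A : Matrix n n ℂ) : ℝ :=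
  ‖Matrix.toEuclideanCLM (𝕜 := ℂ) A‖

/-- The square root of a positive semidefinite matrix, as `Matrix.PosSemidef.sqrt` was defined
in the older Mathlib (that declaration has since been removed). -/
noncomputable def Matrix.PosSemidef.sqrt {n : Type*} [Fintype n] [DecidableEq n] {𝕜 : Type*}
    [RCLike 𝕜] {A : Matrix n n 𝕜} (hA : A.PosSemidef) : Matrix n n 𝕜 :=
  hA.1.eigenvectorUnitary.1 * Matrix.diagonal ((↑) ∘ (√·) ∘ hA.1.eigenvalues) *
    (star hA.1.eigenvectorUnitary : Matrix n n 𝕜)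

/-- The trace norm (Schatten-1 norm) of a square complex matrix. -/
noncomputable def traceNorm {n : Type*} [Fintype n] [DecidableEq n] (A : Matrix n n ℂ) : ℝ :=
  ((Matrix.posSemidef_conjTranspose_mul_self A).sqrt.trace).re

lemma aux_diag_std {n : ℕ} (i j : Fin n) :
    Matrix.diagonal (Pi.single i (1:ℂ)) * Matrix.single i j 1 *
      Matrix.diagonal (Pi.single j (1:ℂ)) = Matrix.single i j 1 := by
  ext k l
  simp only [Matrix.diagonal_mul, Matrix.mul_diagonal, Matrix.single]
  by_cases hk : k = i <;> by_cases hl : l = j <;>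
    simp [hk, hl, Pi.single_apply, Matrix.of_apply] <;> simp_all [eq_comm]

lemma aux_support {n : ℕ}
    (T : Matrix (Fin n) (Fin n) ℂ →ₗ[ℂ] Matrix (Fin n) (Fin n) ℂ)
    (h : ∀ (x y : Fin n → ℂ) (A : Matrix (Fin n) (Fin n) ℂ),
        T (Matrix.diagonal x * A * Matrix.diagonal y) =
          Matrix.diagonal x * T A * Matrix.diagonal y)
    (i j k l : Fin n) (hne : ¬(k = i ∧ l = j)) :
    T (Matrix.single i j 1) k l = 0 := by
  have := congrArg (fun M : Matrix (Fin n) (Fin n) ℂ => M k l)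
    ((h (Pi.single i 1) (Pi.single j 1) (Matrix.single i j 1)).symm.trans
      (congrArg T (aux_diag_std i j)))
  simp only [Matrix.diagonal_mul, Matrix.mul_diagonal] at this
  rw [← this]
  rcases not_and_or.mp hne with hk | hl
  · simp [Pi.single_apply, hk]
  · simp [Pi.single_apply, hl]

/-- a linear map on `M_n` is a Schur multiplier iff it is a bimodule map over
the diagonal matrices, and then its symbol is given by `φᵢⱼ = (T(|i⟩⟨j|))ᵢⱼ`. -/
theorem schur_multiplier_iff_bimodule {n : ℕ}
    (T : Matrix (Fin n) (Fin n) ℂ →ₗ[ℂ] Matrix (Fin n) (Fin n) ℂ) :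
    ((∃ φ : Matrix (Fin n) (Fin n) ℂ, ∀ X i j, (T X) i j = φ i j * X i j) ↔
      (∀ (x y : Fin n → ℂ) (A : Matrix (Fin n) (Fin n) ℂ),
        T (Matrix.diagonal x * A * Matrix.diagonal y) =
          Matrix.diagonal x * T A * Matrix.diagonal y)) ∧
    ∀ φ : Matrix (Fin n) (Fin n) ℂ, (∀ X i j, (T X) i j = φ i j * X i j) →
      ∀ i j, φ i j = T (Matrix.single i j 1) i j := by
  constructor
  · constructor
    · rintro ⟨φ, hφ⟩ x y A
      ext i j
      simp only [Matrix.diagonal_mul, Matrix.mul_diagonal, hφ]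
      ring
    · intro h
      refine ⟨fun i j => T (Matrix.single i j 1) i j, fun X i j => ?_⟩
      have hX : X = ∑ k, ∑ l, X k l • Matrix.single k l (1:ℂ) := by
        conv_lhs => rw [Matrix.matrix_eq_sum_single X]
        simp_rw [Matrix.smul_single, smul_eq_mul, mul_one]
      conv_lhs => rw [hX]
      rw [map_sum]
      simp only [map_sum, map_smul, Matrix.sum_apply, Matrix.smul_apply, smul_eq_mul]
      rw [Finset.sum_eq_single i]
      · rw [Finset.sum_eq_single j]
        · exact mul_comm _ _
        · intro l _ hl
          rw [aux_support T h i l i j (by tauto), mul_zero]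
        · simp
      · intro k _ hk
        rw [Finset.sum_eq_zero]
        intro l _
        rw [aux_support T h k l i j (by tauto), mul_zero]
      · simp
  · intro φ hφ i j
    rw [hφ]
    simp [Matrix.single]
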